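/- Let f be twice continuously differentiable and nowhere zero on Ω and let P := 1 − (1/(f†f)) f f†. Then at each point of Ω, f satisfies the CP^{N−1} Euler–Lagrange equation P·(∂_L∂_R f − (1/(f†f))((f†∂_Rf)∂_Lf + (f†∂_Lf)∂_Rf)) = 0 if and only if the matrix equation [∂_L∂_R P, P] = 0 holds there, where [·,·] is the matrix commutator. -/

import Mathlib

open Matrix

noncomputable section

attribute [local instance] Matrix.normedAddCommGroup Matrix.normedSpace

/-- Vectors in ℂ^N. -/
abbrev Vec (N : ℕ) := Fin N → ℂ

/-- Hermitian inner product v† w. -/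
def hermIP {N : ℕ} (v w : Vec N) : ℂ := dotProduct (star v) w

/-- The matrix v w†. -/
def outerM {N : ℕ} (v w : Vec N) : Matrix (Fin N) (Fin N) ℂ := vecMulVec v (star w)

/-- The projector P = 1 − (1/(f†f)) f f†. -/
def projM {N : ℕ} (f : Vec N) : Matrix (Fin N) (Fin N) ℂ :=
  1 - (1 / hermIP f f) • outerM f f

/-- Matrix commutator [A,B] = AB − BA. -/
def mcomm {N : ℕ} (A B : Matrix (Fin N) (Fin N) ℂ) : Matrix (Fin N) (Fin N) ℂ :=
  A * B - B * A

/-- Light-cone direction ξ_L. -/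
def dL : ℝ × ℝ := (1, 0)

/-- Light-cone direction ξ_R. -/
def dR : ℝ × ℝ := (0, 1)

/-- Directional (partial) derivative in direction `v`. -/
def pdv {E : Type*} [NormedAddCommGroup E] [NormedSpace ℝ E]
    (v : ℝ × ℝ) (g : ℝ × ℝ → E) (p : ℝ × ℝ) : E := fderiv ℝ g p v

/-- The CP^{N−1} Euler–Lagrange equation
P·(∂_L∂_R f − (1/(f†f))((f†∂_Rf)∂_Lf + (f†∂_Lf)∂_Rf)) = 0 at a point. -/
def EL {N : ℕ} (f : ℝ × ℝ → Vec N) (p : ℝ × ℝ) : Prop :=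
  projM (f p) *ᵥ (pdv dL (fun q => pdv dR f q) p
    - (1 / hermIP (f p) (f p)) • (hermIP (f p) (pdv dR f p) • pdv dL f p
      + hermIP (f p) (pdv dL f p) • pdv dR f p)) = 0

section Aux

variable {N : ℕ}

local instance matTop : TopologicalSpace (Matrix (Fin N) (Fin N) ℂ) :=
  @UniformSpace.toTopologicalSpace _ (@PseudoMetricSpace.toUniformSpace _
    (@SeminormedAddCommGroup.toPseudoMetricSpace _
      (@NormedAddCommGroup.toSeminormedAddCommGroup _ Matrix.normedAddCommGroup)))

lemma hermIP_add_left (v v' w : Vec N) : hermIP (v + v') w = hermIP v w + hermIP v' w := by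
  simp [hermIP, add_dotProduct]
lemma hermIP_add_right (v w w' : Vec N) : hermIP v (w + w') = hermIP v w + hermIP v w' := by
  simp [hermIP, dotProduct_add]
lemma hermIP_sub_right (v w w' : Vec N) : hermIP v (w - w') = hermIP v w - hermIP v w' := by
  simp [hermIP, dotProduct_sub]
lemma hermIP_smul_right (c : ℂ) (v w : Vec N) : hermIP v (c • w) = c * hermIP v w := by
  simp [hermIP, dotProduct_smul, smul_eq_mul]
lemma hermIP_rsmul_left (c : ℝ) (v w : Vec N) : hermIP (c • v) w = c • hermIP v w := by
  simp [hermIP, star_smul, smul_dotProduct]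
lemma hermIP_rsmul_right (c : ℝ) (v w : Vec N) : hermIP v (c • w) = c • hermIP v w := by
  simp [hermIP, dotProduct_smul]
lemma star_hermIP (v w : Vec N) : star (hermIP v w) = hermIP w v := by
  simp [hermIP, dotProduct, Finset.sum_comm, star_sum, mul_comm]
lemma hermIP_self_eq_re (v : Vec N) : hermIP v v = (∑ i, Complex.normSq (v i) : ℝ) := by
  simp [hermIP, dotProduct, Complex.star_def, Complex.normSq_eq_conj_mul_self]
lemma hermIP_self_ne_zero {v : Vec N} (hv : v ≠ 0) : hermIP v v ≠ 0 := by
  rw [hermIP_self_eq_re]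
  intro h
  have h2 : (∑ i, Complex.normSq (v i) : ℝ) = 0 := by exact_mod_cast h
  have := (Finset.sum_eq_zero_iff_of_nonneg (fun i _ => Complex.normSq_nonneg (v i))).1 h2
  exact hv (funext fun i => Complex.normSq_eq_zero.1 (this i (Finset.mem_univ i)))

lemma outerM_add_left (v v' w : Vec N) : outerM (v + v') w = outerM v w + outerM v' w := by
  ext i j; simp [outerM, vecMulVec, add_mul]
lemma outerM_add_right (v w w' : Vec N) : outerM v (w + w') = outerM v w + outerM v w' := by
  ext i j; simp [outerM, vecMulVec, mul_add]
lemma outerM_sub_left (v v' w : Vec N) : outerM (v - v') w = outerM v w - outerM v' w := by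
  ext i j; simp [outerM, vecMulVec, sub_mul]
lemma outerM_sub_right (v w w' : Vec N) : outerM v (w - w') = outerM v w - outerM v w' := by
  ext i j; simp [outerM, vecMulVec, mul_sub]
lemma outerM_smul_left (c : ℂ) (v w : Vec N) : outerM (c • v) w = c • outerM v w := by
  ext i j; simp [outerM, vecMulVec, mul_assoc]
lemma outerM_smul_right (c : ℂ) (v w : Vec N) : outerM v (c • w) = star c • outerM v w := by
  ext i j; simp [outerM, vecMulVec]; ring
lemma outerM_rsmul_left (c : ℝ) (v w : Vec N) : outerM (c • v) w = c • outerM v w := by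
  ext i j; simp [outerM, vecMulVec, Complex.real_smul]; ring
lemma outerM_rsmul_right (c : ℝ) (v w : Vec N) : outerM v (c • w) = c • outerM v w := by
  ext i j; simp [outerM, vecMulVec, Complex.real_smul]; ring
lemma outerM_zero_left (w : Vec N) : outerM 0 w = 0 := by
  ext i j; simp [outerM, vecMulVec]
lemma outerM_zero_right (v : Vec N) : outerM v 0 = 0 := by
  ext i j; simp [outerM, vecMulVec]

lemma outerM_mul_outerM (v w x y : Vec N) :
    outerM v w * outerM x y = hermIP w x • outerM v y := by
  ext i j
  simp [outerM, vecMulVec, hermIP, dotProduct, Matrix.mul_apply, Finset.mul_sum,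
    Finset.sum_mul, smul_eq_mul]
  congr 1; ext k; ring
lemma outerM_mulVec (v w x : Vec N) : outerM v w *ᵥ x = hermIP w x • v := by
  ext i
  simp [outerM, vecMulVec, hermIP, dotProduct, Matrix.mulVec, Finset.sum_mul, smul_eq_mul,
    Finset.mul_sum]
  congr 1; ext k; ring

lemma hermIP_projM_mulVec (F x : Vec N) (h0 : hermIP F F ≠ 0) :
    hermIP F (projM F *ᵥ x) = 0 := by
  simp only [projM, one_div, Matrix.sub_mulVec, Matrix.one_mulVec, Matrix.smul_mulVec,
    outerM_mulVec, hermIP_sub_right, hermIP_smul_right, smul_smul]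
  field_simp; simp

/-- hermIP as a real-bilinear CLM. -/
def hB : Vec N →L[ℝ] Vec N →L[ℝ] ℂ :=
  LinearMap.toContinuousLinearMap
  { toFun := fun v => LinearMap.toContinuousLinearMap
      { toFun := fun w => hermIP v w
        map_add' := fun w w' => hermIP_add_right v w w'
        map_smul' := fun c w => hermIP_rsmul_right c v w }
    map_add' := fun v v' => by
      ext w; simp [hermIP_add_left]
    map_smul' := fun c v => by
      ext w; simp [hermIP_rsmul_left] }

@[simp] lemma hB_apply (v w : Vec N) : hB v w = hermIP v w := rfl

/-- outer product as a real-bilinear CLM. -/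
def oB : Vec N →L[ℝ] Vec N →L[ℝ] Matrix (Fin N) (Fin N) ℂ :=
  LinearMap.toContinuousLinearMap
  { toFun := fun v => LinearMap.toContinuousLinearMap
      { toFun := fun w => outerM v w
        map_add' := fun w w' => outerM_add_right v w w'
        map_smul' := fun c w => outerM_rsmul_right c v w }
    map_add' := fun v v' => by
      ext w : 1; simp [outerM_add_left]
    map_smul' := fun c v => by
      ext w : 1; simp [outerM_rsmul_left] }

@[simp] lemma oB_apply (v w : Vec N) : oB v w = outerM v w := rfl

lemma hasFDerivAt_r {f : ℝ × ℝ → Vec N} {D : ℝ × ℝ →L[ℝ] Vec N} {q : ℝ × ℝ}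
    (hD : HasFDerivAt f D q) :
    HasFDerivAt (fun y => hermIP (f y) (f y))
      ((hB (f q)).comp D + (hB.comp D).flip (f q)) q :=
  (hB.hasFDerivAt.comp q hD).clm_apply hD

lemma hasFDerivAt_M {f : ℝ × ℝ → Vec N} {D : ℝ × ℝ →L[ℝ] Vec N} {q : ℝ × ℝ}
    (hD : HasFDerivAt f D q) :
    HasFDerivAt (fun y => outerM (f y) (f y))
      ((oB (f q)).comp D + (oB.comp D).flip (f q)) q :=
  (oB.hasFDerivAt.comp q hD).clm_apply hD

lemma hasFDerivAt_inv_r {f : ℝ × ℝ → Vec N} {D : ℝ × ℝ →L[ℝ] Vec N} {q : ℝ × ℝ}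
    (hD : HasFDerivAt f D q) (h0 : hermIP (f q) (f q) ≠ 0) :
    HasFDerivAt (fun y => (hermIP (f y) (f y))⁻¹)
      ((-ContinuousLinearMap.mulLeftRight ℝ ℂ (hermIP (f q) (f q))⁻¹
        (hermIP (f q) (f q))⁻¹).comp
        ((hB (f q)).comp D + (hB.comp D).flip (f q))) q :=
  (hasFDerivAt_inv' h0).comp q (hasFDerivAt_r hD)

lemma hasFDerivAt_projM {f : ℝ × ℝ → Vec N} {D : ℝ × ℝ →L[ℝ] Vec N} {q : ℝ × ℝ}
    (hD : HasFDerivAt f D q) (h0 : hermIP (f q) (f q) ≠ 0) :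
    HasFDerivAt (fun y => projM (f y))
      (-((hermIP (f q) (f q))⁻¹ • ((oB (f q)).comp D + (oB.comp D).flip (f q)) +
        (((-ContinuousLinearMap.mulLeftRight ℝ ℂ (hermIP (f q) (f q))⁻¹
          (hermIP (f q) (f q))⁻¹).comp
          ((hB (f q)).comp D + (hB.comp D).flip (f q))).smulRight
          (outerM (f q) (f q))))) q := by
  have heq : (fun y => projM (f y))
      = fun y => (1 : Matrix (Fin N) (Fin N) ℂ)
        - (hermIP (f y) (f y))⁻¹ • outerM (f y) (f y) := by
    funext y; rw [projM, one_div]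
  rw [heq]
  exact ((hasFDerivAt_inv_r hD h0).smul (hasFDerivAt_M hD)).const_sub 1

lemma pdv_projM {f : ℝ × ℝ → Vec N} {D : ℝ × ℝ →L[ℝ] Vec N} {q : ℝ × ℝ}
    (hD : HasFDerivAt f D q) (h0 : hermIP (f q) (f q) ≠ 0) (v : ℝ × ℝ) :
    pdv v (fun y => projM (f y)) q =
      ((hermIP (f q) (f q))⁻¹ * (hermIP (D v) (f q) + hermIP (f q) (D v))
        * (hermIP (f q) (f q))⁻¹) • outerM (f q) (f q)
      - (hermIP (f q) (f q))⁻¹ • (outerM (D v) (f q) + outerM (f q) (D v)) := by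
  rw [pdv, (hasFDerivAt_projM hD h0).fderiv]
  simp [ContinuousLinearMap.smul_apply, ContinuousLinearMap.smulRight_apply,
    ContinuousLinearMap.comp_apply, ContinuousLinearMap.flip_apply,
    ContinuousLinearMap.mulLeftRight_apply, smul_smul, smul_add, sub_eq_iff_eq_add]
  module

lemma pdv_pdv_projM {f : ℝ × ℝ → Vec N} {p : ℝ × ℝ}
    (hf2 : ContDiffAt ℝ 2 f p) (hne : ∀ᶠ q in nhds p, f q ≠ 0) :
    pdv dL (fun q => pdv dR (fun y => projM (f y)) q) p =
      ((hermIP (f p) (f p))⁻¹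
        * (hermIP (pdv dL (fun q => pdv dR f q) p) (f p)
            + hermIP (pdv dR f p) (pdv dL f p)
            + hermIP (pdv dL f p) (pdv dR f p)
            + hermIP (f p) (pdv dL (fun q => pdv dR f q) p))
        * (hermIP (f p) (f p))⁻¹
        - (hermIP (f p) (f p))⁻¹ * (hermIP (pdv dL f p) (f p) + hermIP (f p) (pdv dL f p))
          * (hermIP (f p) (f p))⁻¹ * (hermIP (pdv dR f p) (f p) + hermIP (f p) (pdv dR f p))
          * (hermIP (f p) (f p))⁻¹
        - (hermIP (f p) (f p))⁻¹ * (hermIP (pdv dR f p) (f p) + hermIP (f p) (pdv dR f p))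
          * (hermIP (f p) (f p))⁻¹ * (hermIP (pdv dL f p) (f p) + hermIP (f p) (pdv dL f p))
          * (hermIP (f p) (f p))⁻¹) • outerM (f p) (f p)
      + ((hermIP (f p) (f p))⁻¹ * (hermIP (pdv dR f p) (f p) + hermIP (f p) (pdv dR f p))
          * (hermIP (f p) (f p))⁻¹)
        • (outerM (pdv dL f p) (f p) + outerM (f p) (pdv dL f p))
      + ((hermIP (f p) (f p))⁻¹ * (hermIP (pdv dL f p) (f p) + hermIP (f p) (pdv dL f p))
          * (hermIP (f p) (f p))⁻¹)
        • (outerM (pdv dR f p) (f p) + outerM (f p) (pdv dR f p))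
      - (hermIP (f p) (f p))⁻¹
        • (outerM (pdv dL (fun q => pdv dR f q) p) (f p) + outerM (pdv dR f p) (pdv dL f p)
          + outerM (pdv dL f p) (pdv dR f p)
          + outerM (f p) (pdv dL (fun q => pdv dR f q) p)) := by
  have hD : HasFDerivAt f (fderiv ℝ f p) p :=
    (hf2.differentiableAt (by norm_num)).hasFDerivAt
  have hD2 : HasFDerivAt (fderiv ℝ f) (fderiv ℝ (fderiv ℝ f) p) p :=
    ((hf2.fderiv_right (m := 1) (by norm_num)).differentiableAt (by norm_num)).hasFDerivAt
  have hfR : HasFDerivAt (fun y => fderiv ℝ f y dR)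
      ((ContinuousLinearMap.apply ℝ (Vec N) dR).comp (fderiv ℝ (fderiv ℝ f) p)) p :=
    (ContinuousLinearMap.apply ℝ (Vec N) dR).hasFDerivAt.comp p hD2
  have h0 : hermIP (f p) (f p) ≠ 0 := hermIP_self_ne_zero hne.self_of_nhds
  have hevent : (fun q => pdv dR (fun y => projM (f y)) q) =ᶠ[nhds p]
      (fun q => ((hermIP (f q) (f q))⁻¹
          * (hermIP (fderiv ℝ f q dR) (f q) + hermIP (f q) (fderiv ℝ f q dR))
          * (hermIP (f q) (f q))⁻¹) • outerM (f q) (f q)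
        - (hermIP (f q) (f q))⁻¹
          • (outerM (fderiv ℝ f q dR) (f q) + outerM (f q) (fderiv ℝ f q dR))) := by
    filter_upwards [hf2.eventually (by norm_num), hne] with q hq hqz
    exact pdv_projM (hq.differentiableAt (by norm_num)).hasFDerivAt
      (hermIP_self_ne_zero hqz) dR
  have hM := hasFDerivAt_M hD
  have hinv := hasFDerivAt_inv_r hD h0
  have hρ := ((hB.hasFDerivAt.comp p hfR).clm_apply hD).add
    ((hB.hasFDerivAt.comp p hD).clm_apply hfR)
  have hX := ((oB.hasFDerivAt.comp p hfR).clm_apply hD).add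
    ((oB.hasFDerivAt.comp p hD).clm_apply hfR)
  have hG1 := (((hinv.mul hρ).mul hinv).smul hM).sub (hinv.smul hX)
  have hG1' : HasFDerivAt (fun q => ((hermIP (f q) (f q))⁻¹
          * (hermIP (fderiv ℝ f q dR) (f q) + hermIP (f q) (fderiv ℝ f q dR))
          * (hermIP (f q) (f q))⁻¹) • outerM (f q) (f q)
        - (hermIP (f q) (f q))⁻¹
          • (outerM (fderiv ℝ f q dR) (f q) + outerM (f q) (fderiv ℝ f q dR))) _ p := hG1
  have hFLR : fderiv ℝ (fun q => fderiv ℝ f q dR) p dL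
      = fderiv ℝ (fderiv ℝ f) p dL dR := by
    rw [hfR.fderiv]; rfl
  rw [pdv, hevent.fderiv_eq, hG1'.fderiv]
  simp only [ContinuousLinearMap.smul_apply, ContinuousLinearMap.smulRight_apply,
    ContinuousLinearMap.comp_apply, ContinuousLinearMap.flip_apply,
    ContinuousLinearMap.add_apply, ContinuousLinearMap.sub_apply,
    ContinuousLinearMap.neg_apply, ContinuousLinearMap.mulLeftRight_apply,
    ContinuousLinearMap.mul_apply', ContinuousLinearMap.apply_apply,
    Function.comp_apply, Function.comp,
    hB_apply, oB_apply, pdv, hFLR, smul_eq_mul, Pi.mul_apply, Pi.add_apply]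
  module

set_option maxHeartbeats 4000000 in
lemma alg_comm (F FL FR FLR : Vec N) (h0 : hermIP F F ≠ 0) :
    mcomm
      (((hermIP F F)⁻¹
          * (hermIP FLR F + hermIP FR FL + hermIP FL FR + hermIP F FLR)
          * (hermIP F F)⁻¹
          - (hermIP F F)⁻¹ * (hermIP FL F + hermIP F FL)
            * (hermIP F F)⁻¹ * (hermIP FR F + hermIP F FR) * (hermIP F F)⁻¹
          - (hermIP F F)⁻¹ * (hermIP FR F + hermIP F FR)
            * (hermIP F F)⁻¹ * (hermIP FL F + hermIP F FL) * (hermIP F F)⁻¹) • outerM F F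
        + ((hermIP F F)⁻¹ * (hermIP FR F + hermIP F FR) * (hermIP F F)⁻¹)
          • (outerM FL F + outerM F FL)
        + ((hermIP F F)⁻¹ * (hermIP FL F + hermIP F FL) * (hermIP F F)⁻¹)
          • (outerM FR F + outerM F FR)
        - (hermIP F F)⁻¹
          • (outerM FLR F + outerM FR FL + outerM FL FR + outerM F FLR))
      (projM F)
    = (hermIP F F)⁻¹ •
        (outerM (projM F *ᵥ (FLR - (1 / hermIP F F)
            • (hermIP F FR • FL + hermIP F FL • FR))) F
          - outerM F (projM F *ᵥ (FLR - (1 / hermIP F F)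
            • (hermIP F FR • FL + hermIP F FL • FR)))) := by
  simp only [mcomm, projM, one_div, Matrix.sub_mulVec, Matrix.one_mulVec,
    Matrix.smul_mulVec, outerM_mulVec,
    hermIP_sub_right, hermIP_add_right, hermIP_smul_right,
    smul_add, smul_sub, smul_smul,
    outerM_sub_left, outerM_sub_right, outerM_add_left, outerM_add_right,
    outerM_smul_left, outerM_smul_right,
    sub_mul, mul_sub, add_mul, mul_add, smul_mul_assoc, mul_smul_comm,
    outerM_mul_outerM, mul_one, one_mul,
    star_sub, star_add, star_mul', star_inv₀, star_hermIP, smul_eq_mul]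
  match_scalars <;>
    (field_simp <;> (try rw [div_eq_iff (by simp [h0])]) <;> try ring)

end Aux

theorem stmt0 {N : ℕ} (hN : 2 ≤ N) (Ω : Set (ℝ × ℝ)) (hΩ : IsOpen Ω)
    (f : ℝ × ℝ → Vec N) (hf : ContDiffOn ℝ 2 f Ω) (hfz : ∀ p ∈ Ω, f p ≠ 0) :
    ∀ p ∈ Ω, EL f p ↔
      mcomm (pdv dL (fun q => pdv dR (fun r => projM (f r)) q) p) (projM (f p)) = 0 := by
  intro p hp
  have hf2 : ContDiffAt ℝ 2 f p := (hf p hp).contDiffAt (hΩ.mem_nhds hp)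
  have hne : ∀ᶠ q in nhds p, f q ≠ 0 := by
    filter_upwards [hΩ.mem_nhds hp] with q hq using hfz q hq
  have h0 : hermIP (f p) (f p) ≠ 0 := hermIP_self_ne_zero (hfz p hp)
  rw [pdv_pdv_projM hf2 hne,
    alg_comm (f p) (pdv dL f p) (pdv dR f p) (pdv dL (fun q => pdv dR f q) p) h0]
  constructor
  · intro h
    have hw : projM (f p) *ᵥ (pdv dL (fun q => pdv dR f q) p
        - (1 / hermIP (f p) (f p)) • (hermIP (f p) (pdv dR f p) • pdv dL f p
          + hermIP (f p) (pdv dL f p) • pdv dR f p)) = 0 := h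
    rw [hw]
    simp [outerM_zero_left, outerM_zero_right]
  · intro h
    show projM (f p) *ᵥ (pdv dL (fun q => pdv dR f q) p
        - (1 / hermIP (f p) (f p)) • (hermIP (f p) (pdv dR f p) • pdv dL f p
          + hermIP (f p) (pdv dL f p) • pdv dR f p)) = 0
    set w := projM (f p) *ᵥ (pdv dL (fun q => pdv dR f q) p
        - (1 / hermIP (f p) (f p)) • (hermIP (f p) (pdv dR f p) • pdv dL f p
          + hermIP (f p) (pdv dL f p) • pdv dR f p)) with hwdef
    have hw0 : hermIP (f p) w = 0 := hermIP_projM_mulVec _ _ h0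
    have h2 := congrArg (fun A => A *ᵥ f p) h
    simp only [Matrix.smul_mulVec, Matrix.sub_mulVec, outerM_mulVec,
      Matrix.zero_mulVec] at h2
    rw [show hermIP w (f p) = 0 by rw [← star_hermIP, hw0, star_zero]] at h2
    simp only [zero_smul, sub_zero, smul_smul, inv_mul_cancel₀ h0, one_smul] at h2
    exact h2
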